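/- Let D_J = {±ε_j ± ε_k : j ≠ k} and C_J = {±2ε_j} ∪ D_J be root systems in ℚ^{(J)} with the standard inner product, and consider the sets Δ₁ = (D_J × ℤ) ∪ ((C_J)_lg × (2ℤ+1)) and Δ₂ = (C_J × 2ℤ) ∪ (D_J × (2ℤ+1)) inside ℚ^{(J)} × ℚ, where (C_J)_lg = {±2ε_j}. Then the linear map determined on the hyperplane spanned by the vectors (2ε_j, 1), j ∈ J, together with the isotropic vector δ = (0,1), which sends the reflectable section appropriately, defines a linear isomorphism of ℚ^{(J)} × ℚ carrying Δ₁ onto Δ₂. -/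

import Mathlib

/-- The basis vector `ε_j` of the free `ℚ`-vector space `ℚ^(J)`. -/
noncomputable def epsQ {J : Type*} (j : J) : J →₀ ℚ := Finsupp.single j 1

/-- The root system `D_J = {±ε_j ± ε_k : j ≠ k}`. -/
def DJset (J : Type*) : Set (J →₀ ℚ) :=
  {v | ∃ j k : J, j ≠ k ∧ (v = epsQ j + epsQ k ∨ v = epsQ j - epsQ k ∨
    v = -epsQ j + epsQ k ∨ v = -epsQ j - epsQ k)}

/-- The long roots `(C_J)_lg = {±2ε_j}`. -/
def CJlgset (J : Type*) : Set (J →₀ ℚ) :=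
  {v | ∃ j : J, v = (2 : ℚ) • epsQ j ∨ v = -((2 : ℚ) • epsQ j)}

/-- The root system `C_J = {±2ε_j} ∪ D_J`. -/
def CJset (J : Type*) : Set (J →₀ ℚ) := CJlgset J ∪ DJset J

/-- `Δ₁ = (D_J × ℤ) ∪ ((C_J)_lg × (2ℤ+1))` inside `ℚ^(J) × ℚ`. -/
def Delta1 (J : Type*) : Set ((J →₀ ℚ) × ℚ) :=
  {p | (p.1 ∈ DJset J ∧ ∃ m : ℤ, p.2 = (m : ℚ)) ∨
    (p.1 ∈ CJlgset J ∧ ∃ m : ℤ, p.2 = 2 * (m : ℚ) + 1)}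

/-- `Δ₂ = C_J^{(2)} = (C_J × 2ℤ) ∪ (D_J × (2ℤ+1))` inside `ℚ^(J) × ℚ`. -/
def Delta2 (J : Type*) : Set ((J →₀ ℚ) × ℚ) :=
  {p | (p.1 ∈ CJset J ∧ ∃ m : ℤ, p.2 = 2 * (m : ℚ)) ∨
    (p.1 ∈ DJset J ∧ ∃ m : ℤ, p.2 = 2 * (m : ℚ) + 1)}

noncomputable def Lh (J : Type*) : (J →₀ ℚ) →ₗ[ℚ] ℚ :=
  Finsupp.lsum ℚ (fun _ => (1/2 : ℚ) • LinearMap.id)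

lemma Lh_eps {J : Type*} (j : J) : Lh J (epsQ j) = 1/2 := by
  simp [Lh, epsQ]

lemma Lh_DJ {J : Type*} {v : J →₀ ℚ} (h : v ∈ DJset J) :
    Lh J v = 1 ∨ Lh J v = 0 ∨ Lh J v = -1 := by
  obtain ⟨j, k, -, h⟩ := h
  rcases h with h | h | h | h <;> subst h <;>
    simp [map_add, map_sub, map_neg, Lh_eps] <;> norm_num

lemma Lh_Clg {J : Type*} {v : J →₀ ℚ} (h : v ∈ CJlgset J) :
    Lh J v = 1 ∨ Lh J v = -1 := by
  obtain ⟨j, h⟩ := h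
  rcases h with h | h <;> subst h <;>
    simp [map_smul, map_neg, Lh_eps]

noncomputable def shear (J : Type*) : ((J →₀ ℚ) × ℚ) ≃ₗ[ℚ] ((J →₀ ℚ) × ℚ) where
  toFun p := (p.1, p.2 + Lh J p.1)
  invFun p := (p.1, p.2 - Lh J p.1)
  map_add' p q := by simp only [Prod.fst_add, Prod.snd_add, map_add, Prod.mk_add_mk]; ring_nf
  map_smul' c p := by
    simp only [Prod.smul_fst, Prod.smul_snd, map_smul, RingHom.id_apply, Prod.smul_mk,
      smul_eq_mul]
    ring_nf
  left_inv p := by simp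
  right_inv p := by simp

theorem stmt_14 (J : Type*) :
    ∃ φ : ((J →₀ ℚ) × ℚ) ≃ₗ[ℚ] ((J →₀ ℚ) × ℚ),
      (∀ p : (J →₀ ℚ) × ℚ, (φ p).1 = p.1) ∧
      φ (0, 1) = (0, 1) ∧
      φ '' Delta1 J = Delta2 J := by
  refine ⟨shear J, fun p => rfl, by simp [shear], ?_⟩
  ext q
  have hsym : (shear J).symm q = (q.1, q.2 - Lh J q.1) := rfl
  rw [show ((shear J) '' Delta1 J) = (shear J).symm ⁻¹' Delta1 J from
    (shear J).toEquiv.image_eq_preimage_symm _]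
  simp only [Set.mem_preimage, hsym]
  simp only [Delta1, Delta2, Set.mem_setOf_eq]
  constructor
  · rintro (⟨hD, m, hm⟩ | ⟨hC, m, hm⟩)
    · rcases Lh_DJ hD with hL | hL | hL <;> rw [hL] at hm <;>
        rcases Int.even_or_odd m with ⟨t, ht⟩ | ⟨t, ht⟩ <;> subst ht
      · exact Or.inr ⟨hD, t, by push_cast at hm ⊢; linarith⟩
      · exact Or.inl ⟨Or.inr hD, t + 1, by push_cast at hm ⊢; linarith⟩
      · exact Or.inl ⟨Or.inr hD, t, by push_cast at hm ⊢; linarith⟩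
      · exact Or.inr ⟨hD, t, by push_cast at hm ⊢; linarith⟩
      · exact Or.inr ⟨hD, t - 1, by push_cast at hm ⊢; linarith⟩
      · exact Or.inl ⟨Or.inr hD, t, by push_cast at hm ⊢; linarith⟩
    · rcases Lh_Clg hC with hL | hL <;> rw [hL] at hm
      · exact Or.inl ⟨Or.inl hC, m + 1, by push_cast at hm ⊢; linarith⟩
      · exact Or.inl ⟨Or.inl hC, m, by push_cast at hm ⊢; linarith⟩
  · rintro (⟨hC, m, hm⟩ | ⟨hD, m, hm⟩)
    · rcases hC with hC | hD
      · rcases Lh_Clg hC with hL | hL <;> rw [hL] <;> right <;> refine ⟨hC, ?_⟩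
        · exact ⟨m - 1, by push_cast; linarith⟩
        · exact ⟨m, by push_cast; linarith⟩
      · rcases Lh_DJ hD with hL | hL | hL <;> rw [hL] <;> left <;> refine ⟨hD, ?_⟩
        · exact ⟨2 * m - 1, by push_cast; linarith⟩
        · exact ⟨2 * m, by push_cast; linarith⟩
        · exact ⟨2 * m + 1, by push_cast; linarith⟩
    · rcases Lh_DJ hD with hL | hL | hL <;> rw [hL] <;> left <;> refine ⟨hD, ?_⟩
      · exact ⟨2 * m, by push_cast; linarith⟩
      · exact ⟨2 * m + 1, by push_cast; linarith⟩
      · exact ⟨2 * m + 2, by push_cast; linarith⟩
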